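/- Let φ₀(R) = 2R/(1 + R²) and e₂(R) = (R⁴ + 4R²·log R − 1)/(2R·(R² + 1)). Let F : (0,∞) → ℝ be continuous and integrable on (0,1]. Define w(R) = −(φ₀(R)/2)·∫₀^R F(s)·s·e₂(s) ds + e₂(R)·∫₀^R F(s)·s·φ₀(s)/2 ds. Then w is twice continuously differentiable on (0,∞) and satisfies w''(R) + w'(R)/R − (1/R² − 8/(1 + R²)²)·w(R) = F(R) for all R > 0. -/

import Mathlib

open Real MeasureTheory

/-- φ₀(R) = 2R/(1+R²). -/
noncomputable def phi0 (R : ℝ) : ℝ := 2*R/(1 + R^2)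

/-- e₂(R) = (R⁴ + 4R² log R − 1)/(2R(R²+1)). -/
noncomputable def e2fun (R : ℝ) : ℝ := (R^4 + 4*R^2*Real.log R - 1)/(2*R*(R^2 + 1))

/-- The variation-of-parameters solution of the linearized elliptic equation with
right-hand side F. -/
noncomputable def greenSol (F : ℝ → ℝ) (R : ℝ) : ℝ :=
  -(phi0 R / 2) * (∫ s in (0:ℝ)..R, F s * s * e2fun s)
    + e2fun R * (∫ s in (0:ℝ)..R, F s * s * phi0 s / 2)



noncomputable def p1d (R : ℝ) : ℝ := 2*(1-R^2)/(1+R^2)^2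
noncomputable def p1dd (R : ℝ) : ℝ := 4*R*(R^2-3)/(1+R^2)^3
noncomputable def e2d (R : ℝ) : ℝ :=
  ((4*R^3+8*R*Real.log R+4*R)*(2*R*(R^2+1)) - (R^4+4*R^2*Real.log R-1)*(6*R^2+2))/(2*R*(R^2+1))^2
noncomputable def e2dd (R : ℝ) : ℝ :=
  (((12*R^2+8*Real.log R+12)*(2*R*(R^2+1)) - (R^4+4*R^2*Real.log R-1)*(12*R))*(2*R*(R^2+1))^2
   - ((4*R^3+8*R*Real.log R+4*R)*(2*R*(R^2+1)) - (R^4+4*R^2*Real.log R-1)*(6*R^2+2))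
     *(2*(2*R*(R^2+1))*(6*R^2+2)))/(2*R*(R^2+1))^4

lemma hasDerivAt_phi0 (R : ℝ) : HasDerivAt phi0 (p1d R) R := by
  have hne : (1 + R^2) ≠ 0 := by positivity
  have h1 : HasDerivAt (fun x : ℝ => 2*x) 2 R := by
    simpa using (hasDerivAt_id R).const_mul 2
  have h2 : HasDerivAt (fun x : ℝ => 1 + x^2) (2*R) R := by
    simpa using ((hasDerivAt_pow 2 R).const_add 1)
  have := h1.div h2 hne
  refine this.congr_deriv ?_
  unfold p1d
  field_simp
  ring

lemma hasDerivAt_p1d (R : ℝ) : HasDerivAt p1d (p1dd R) R := by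
  have hne : ((1 + R^2)^2) ≠ 0 := by positivity
  have h1 : HasDerivAt (fun x : ℝ => 2*(1-x^2)) (-(4*R)) R := by
    have := ((hasDerivAt_pow 2 R).const_sub 1).const_mul 2
    refine this.congr_deriv ?_; ring
  have h2 : HasDerivAt (fun x : ℝ => (1+x^2)^2) (2*(1+R^2)*(2*R)) R := by
    have := ((hasDerivAt_pow 2 R).const_add 1).pow 2
    refine this.congr_deriv ?_; push_cast; ring
  have := h1.div h2 hne
  refine this.congr_deriv ?_
  unfold p1dd
  have hne' : (1 + R^2) ≠ 0 := by positivity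
  field_simp
  ring

lemma hasDerivAt_e2fun {R : ℝ} (hR : 0 < R) : HasDerivAt e2fun (e2d R) R := by
  have hlog := Real.hasDerivAt_log hR.ne'
  have hN : HasDerivAt (fun x : ℝ => x^4 + 4*x^2*Real.log x - 1)
      (4*R^3+8*R*Real.log R+4*R) R := by
    have h1 : HasDerivAt (fun x : ℝ => x^4) (4*R^3) R := by simpa using hasDerivAt_pow 4 R
    have h2 : HasDerivAt (fun x : ℝ => 4*x^2) (8*R) R := by
      have := (hasDerivAt_pow 2 R).const_mul 4
      refine this.congr_deriv ?_; push_cast; ring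
    have h3 := h2.mul hlog
    have := (h1.add h3).sub_const 1
    refine this.congr_deriv ?_
    field_simp
    ring
  have hD : HasDerivAt (fun x : ℝ => 2*x*(x^2+1)) (6*R^2+2) R := by
    have h1 : HasDerivAt (fun x : ℝ => 2*x) 2 R := by simpa using (hasDerivAt_id R).const_mul 2
    have h2 : HasDerivAt (fun x : ℝ => x^2+1) (2*R) R := by
      simpa using (hasDerivAt_pow 2 R).add_const 1
    have := h1.mul h2
    refine this.congr_deriv ?_; ring
  have hDne : 2*R*(R^2+1) ≠ 0 := by positivity
  have := hN.div hD hDne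
  exact this

lemma hasDerivAt_e2d {R : ℝ} (hR : 0 < R) : HasDerivAt e2d (e2dd R) R := by
  have hlog := Real.hasDerivAt_log hR.ne'
  have hN : HasDerivAt (fun x : ℝ => x^4 + 4*x^2*Real.log x - 1)
      (4*R^3+8*R*Real.log R+4*R) R := by
    have h1 : HasDerivAt (fun x : ℝ => x^4) (4*R^3) R := by simpa using hasDerivAt_pow 4 R
    have h2 : HasDerivAt (fun x : ℝ => 4*x^2) (8*R) R := by
      have := (hasDerivAt_pow 2 R).const_mul 4
      refine this.congr_deriv ?_; push_cast; ring
    have := (h1.add (h2.mul hlog)).sub_const 1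
    refine this.congr_deriv ?_
    field_simp; ring
  have hNp : HasDerivAt (fun x : ℝ => 4*x^3+8*x*Real.log x+4*x)
      (12*R^2+8*Real.log R+12) R := by
    have h1 : HasDerivAt (fun x : ℝ => 4*x^3) (12*R^2) R := by
      have := (hasDerivAt_pow 3 R).const_mul 4
      refine this.congr_deriv ?_; push_cast; ring
    have h2 : HasDerivAt (fun x : ℝ => 8*x) 8 R := by simpa using (hasDerivAt_id R).const_mul 8
    have h3 : HasDerivAt (fun x : ℝ => 4*x) 4 R := by simpa using (hasDerivAt_id R).const_mul 4
    have := (h1.add ((h2.mul hlog))).add h3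
    refine this.congr_deriv ?_
    field_simp; ring
  have hD : HasDerivAt (fun x : ℝ => 2*x*(x^2+1)) (6*R^2+2) R := by
    have h1 : HasDerivAt (fun x : ℝ => 2*x) 2 R := by simpa using (hasDerivAt_id R).const_mul 2
    have h2 : HasDerivAt (fun x : ℝ => x^2+1) (2*R) R := by
      simpa using (hasDerivAt_pow 2 R).add_const 1
    have := h1.mul h2
    refine this.congr_deriv ?_; ring
  have hDp : HasDerivAt (fun x : ℝ => 6*x^2+2) (12*R) R := by
    have := ((hasDerivAt_pow 2 R).const_mul 6).add_const 2
    refine this.congr_deriv ?_; ring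
  have hA : HasDerivAt
      (fun x : ℝ => (4*x^3+8*x*Real.log x+4*x)*(2*x*(x^2+1)) - (x^4+4*x^2*Real.log x-1)*(6*x^2+2))
      ((12*R^2+8*Real.log R+12)*(2*R*(R^2+1)) + (4*R^3+8*R*Real.log R+4*R)*(6*R^2+2)
        - ((4*R^3+8*R*Real.log R+4*R)*(6*R^2+2) + (R^4+4*R^2*Real.log R-1)*(12*R))) R :=
    (hNp.mul hD).sub (hN.mul hDp)
  have hB : HasDerivAt (fun x : ℝ => (2*x*(x^2+1))^2) (2*(2*R*(R^2+1))*(6*R^2+2)) R := by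
    have := hD.pow 2
    refine this.congr_deriv ?_; push_cast; ring
  have hBne : (2*R*(R^2+1))^2 ≠ 0 := by positivity
  have := hA.div hB hBne
  refine this.congr_deriv ?_
  unfold e2dd
  ring

lemma hom_phi {R : ℝ} (hR : 0 < R) :
    p1dd R + p1d R / R - (1/R^2 - 8/(1 + R^2)^2) * phi0 R = 0 := by
  have h1 : R ≠ 0 := hR.ne'
  have h2 : (1 : ℝ) + R^2 ≠ 0 := by positivity
  unfold p1dd p1d phi0
  field_simp
  ring

lemma hom_e2 {R : ℝ} (hR : 0 < R) :
    e2dd R + e2d R / R - (1/R^2 - 8/(1 + R^2)^2) * e2fun R = 0 := by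
  have h1 : R ≠ 0 := hR.ne'
  have h2 : (1 : ℝ) + R^2 ≠ 0 := by positivity
  have h3 : R^2 + 1 ≠ 0 := by positivity
  unfold e2dd e2d e2fun
  field_simp
  ring

lemma wron {R : ℝ} (hR : 0 < R) :
    R * (phi0 R * e2d R - p1d R * e2fun R) = 2 := by
  have h1 : R ≠ 0 := hR.ne'
  have h2 : (1 : ℝ) + R^2 ≠ 0 := by positivity
  have h3 : R^2 + 1 ≠ 0 := by positivity
  unfold phi0 e2d p1d e2fun
  field_simp
  ring



-- bound lemmas
lemma abs_mul_e2fun_le {s : ℝ} (hs : 0 < s) (hs1 : s ≤ 1) :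
    |s * ((s^4 + 4*s^2*Real.log s - 1)/(2*s*(s^2 + 1)))| ≤ 3 := by
  have hne : (2*s*(s^2+1)) ≠ 0 := by positivity
  have key : s * ((s^4 + 4*s^2*Real.log s - 1)/(2*s*(s^2 + 1)))
      = (s^4+4*s^2*Real.log s-1)/(2*(s^2+1)) := by
    field_simp
  have h0 : Real.log s ≤ 0 := Real.log_nonpos hs.le hs1
  have h1 : -Real.log s ≤ s⁻¹ := by
    have := Real.log_le_sub_one_of_pos (inv_pos.mpr hs)
    rw [Real.log_inv] at this
    linarith
  have e2b : -(4*s^2*Real.log s) ≤ 4*s := by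
    have h2 : 4*s^2*(-Real.log s) ≤ 4*s^2*s⁻¹ := by
      apply mul_le_mul_of_nonneg_left h1 (by positivity)
    have h3 : 4*s^2*s⁻¹ = 4*s := by field_simp
    nlinarith
  have e1 : 4*s^2*Real.log s ≤ 0 := by nlinarith [sq_nonneg s]
  have hs4 : s^4 ≤ 1 := pow_le_one₀ hs.le hs1
  have hs4' : 0 < s^4 := by positivity
  have hnum : |s^4+4*s^2*Real.log s-1| ≤ 5 := by
    rw [abs_le]; constructor <;> nlinarith
  rw [key, abs_div, abs_of_pos (show (0:ℝ) < 2*(s^2+1) by positivity)]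
  rw [div_le_iff₀ (by positivity)]
  nlinarith [sq_nonneg s]

lemma abs_mul_phi0_le (s : ℝ) : |s * (2*s/(1 + s^2)) / 2| ≤ 1 := by
  have hne : (1 + s^2) ≠ 0 := by positivity
  have key : s * (2*s/(1 + s^2)) / 2 = s^2/(1+s^2) := by field_simp
  rw [key, abs_of_nonneg (by positivity), div_le_one (by positivity)]
  nlinarith

lemma key_int (F g : ℝ → ℝ) (C : ℝ)
    (hFi : IntegrableOn F (Set.Ioc 0 1))
    (hfg : ContinuousOn (fun s => F s * g s) (Set.Ioi 0))
    (hb : ∀ s ∈ Set.Ioc (0:ℝ) 1, |g s| ≤ C) {R : ℝ} (hR : 0 < R) :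
    IntervalIntegrable (fun s => F s * g s) volume 0 R := by
  have h01 : IntervalIntegrable (fun s => F s * g s) volume 0 1 := by
    rw [intervalIntegrable_iff_integrableOn_Ioc_of_le zero_le_one]
    apply Integrable.mono' (g := fun s => C * ‖F s‖) (hFi.norm.const_mul C)
    · exact (hfg.mono Set.Ioc_subset_Ioi_self).aestronglyMeasurable measurableSet_Ioc
    · rw [ae_restrict_iff' measurableSet_Ioc]
      filter_upwards with s hs
      have := hb s hs
      rw [Real.norm_eq_abs, Real.norm_eq_abs, abs_mul]
      calc |F s| * |g s| ≤ |F s| * C :=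
            mul_le_mul_of_nonneg_left (hb s hs) (abs_nonneg _)
        _ = C * |F s| := mul_comm _ _
  have h1R : IntervalIntegrable (fun s => F s * g s) volume 1 R := by
    apply ContinuousOn.intervalIntegrable
    apply hfg.mono
    intro x hx
    rcases Set.mem_uIcc.mp hx with ⟨h, _⟩ | ⟨h, _⟩
    · exact lt_of_lt_of_le one_pos h
    · exact lt_of_lt_of_le hR h
  exact h01.trans h1R

/-- If F is continuous on (0,∞) and integrable on (0,1], then the
variation-of-parameters formula w is C² on (0,∞) and satisfies
w'' + w'/R − (1/R² − 8/(1+R²)²) w = F on (0,∞). -/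

theorem stmt11 (F : ℝ → ℝ) (hFc : ContinuousOn F (Set.Ioi 0))
    (hFi : IntegrableOn F (Set.Ioc 0 1)) :
    ContDiffOn ℝ 2 (greenSol F) (Set.Ioi 0) ∧
    ∀ R : ℝ, 0 < R →
      deriv (deriv (greenSol F)) R + deriv (greenSol F) R / R
        - (1/R^2 - 8/(1 + R^2)^2) * greenSol F R = F R := by
  have he2c : ContinuousOn e2fun (Set.Ioi 0) :=
    fun x hx => (hasDerivAt_e2fun hx).continuousAt.continuousWithinAt
  have he2dc : ContinuousOn e2d (Set.Ioi 0) :=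
    fun x hx => (hasDerivAt_e2d hx).continuousAt.continuousWithinAt
  have hphi0c : Continuous phi0 := by
    rw [continuous_iff_continuousAt]; exact fun x => (hasDerivAt_phi0 x).continuousAt
  have hp1dc : Continuous p1d := by
    rw [continuous_iff_continuousAt]; exact fun x => (hasDerivAt_p1d x).continuousAt
  have hp1ddc : Continuous p1dd := by
    unfold p1dd
    exact Continuous.div (by continuity) (by continuity) (fun x => by positivity)
  have he2ddc : ContinuousOn e2dd (Set.Ioi 0) := by
    intro x hx
    have hx' : (0:ℝ) < x := hx
    apply ContinuousAt.continuousWithinAt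
    have hl : ContinuousAt Real.log x := Real.continuousAt_log (ne_of_gt hx')
    unfold e2dd
    exact ContinuousAt.div (by fun_prop) (by fun_prop) (by positivity)
  have hG1c : ContinuousOn (fun s => F s * s * e2fun s) (Set.Ioi 0) :=
    (hFc.mul continuousOn_id).mul he2c
  have hG2c : ContinuousOn (fun s => F s * s * phi0 s / 2) (Set.Ioi 0) :=
    ((hFc.mul continuousOn_id).mul hphi0c.continuousOn).div_const 2
  have hInt1 : ∀ {R : ℝ}, 0 < R →
      IntervalIntegrable (fun s => F s * s * e2fun s) volume 0 R := by
    intro R hR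
    have heq : (fun s => F s * s * e2fun s) = fun s => F s * (s * e2fun s) := by
      funext s; ring
    rw [heq] at hG1c ⊢
    apply key_int F (fun s => s * e2fun s) 3 hFi hG1c _ hR
    intro s hs
    have := abs_mul_e2fun_le hs.1 hs.2
    simpa [e2fun] using this
  have hInt2 : ∀ {R : ℝ}, 0 < R →
      IntervalIntegrable (fun s => F s * s * phi0 s / 2) volume 0 R := by
    intro R hR
    have heq : (fun s => F s * s * phi0 s / 2) = fun s => F s * (s * phi0 s / 2) := by
      funext s; ring
    rw [heq] at hG2c ⊢
    apply key_int F (fun s => s * phi0 s / 2) 1 hFi hG2c _ hR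
    intro s _
    have := abs_mul_phi0_le s
    simpa [phi0] using this
  have hI1 : ∀ {R : ℝ}, 0 < R →
      HasDerivAt (fun r => ∫ s in (0:ℝ)..r, F s * s * e2fun s) (F R * R * e2fun R) R := by
    intro R hR
    exact intervalIntegral.integral_hasDerivAt_right (hInt1 hR)
      (hG1c.stronglyMeasurableAtFilter isOpen_Ioi R hR)
      (hG1c.continuousAt (isOpen_Ioi.mem_nhds hR))
  have hI2 : ∀ {R : ℝ}, 0 < R →
      HasDerivAt (fun r => ∫ s in (0:ℝ)..r, F s * s * phi0 s / 2)
        (F R * R * phi0 R / 2) R := by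
    intro R hR
    exact intervalIntegral.integral_hasDerivAt_right (hInt2 hR)
      (hG2c.stronglyMeasurableAtFilter isOpen_Ioi R hR)
      (hG2c.continuousAt (isOpen_Ioi.mem_nhds hR))
  have hw : ∀ {R : ℝ}, 0 < R → HasDerivAt (greenSol F)
      (-(p1d R/2) * (∫ s in (0:ℝ)..R, F s * s * e2fun s)
        + e2d R * (∫ s in (0:ℝ)..R, F s * s * phi0 s / 2)) R := by
    intro R hR
    have h1 := ((((hasDerivAt_phi0 R).div_const 2).neg).mul (hI1 hR)).add
      ((hasDerivAt_e2fun hR).mul (hI2 hR))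
    have heq : greenSol F = fun r => -(phi0 r / 2) * (∫ s in (0:ℝ)..r, F s * s * e2fun s)
        + e2fun r * (∫ s in (0:ℝ)..r, F s * s * phi0 s / 2) := rfl
    rw [heq]
    refine h1.congr_deriv ?_
    simp only [Pi.neg_apply]
    unfold e2fun phi0
    ring
  have hw1 : ∀ {R : ℝ}, 0 < R → HasDerivAt
      (fun r => -(p1d r/2) * (∫ s in (0:ℝ)..r, F s * s * e2fun s)
        + e2d r * (∫ s in (0:ℝ)..r, F s * s * phi0 s / 2))
      ((-(p1dd R/2) * (∫ s in (0:ℝ)..R, F s * s * e2fun s)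
          + -(p1d R/2) * (F R * R * e2fun R))
        + (e2dd R * (∫ s in (0:ℝ)..R, F s * s * phi0 s / 2)
          + e2d R * (F R * R * phi0 R / 2))) R := by
    intro R hR
    exact ((((hasDerivAt_p1d R).div_const 2).neg).mul (hI1 hR)).add
      ((hasDerivAt_e2d hR).mul (hI2 hR))
  have hw2 : ∀ {R : ℝ}, 0 < R → HasDerivAt (deriv (greenSol F))
      ((-(p1dd R/2) * (∫ s in (0:ℝ)..R, F s * s * e2fun s)
          + -(p1d R/2) * (F R * R * e2fun R))
        + (e2dd R * (∫ s in (0:ℝ)..R, F s * s * phi0 s / 2)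
          + e2d R * (F R * R * phi0 R / 2))) R := by
    intro R hR
    apply (hw1 hR).congr_of_eventuallyEq
    filter_upwards [isOpen_Ioi.mem_nhds hR] with x hx
    exact (hw hx).deriv
  constructor
  · have hDiff : DifferentiableOn ℝ (greenSol F) (Set.Ioi 0) :=
      fun x hx => (hw hx).differentiableAt.differentiableWithinAt
    rw [show (2 : WithTop ℕ∞) = 1 + 1 by norm_num,
      contDiffOn_succ_iff_deriv_of_isOpen isOpen_Ioi]
    refine ⟨hDiff, by simp, ?_⟩
    have hI1c : ContinuousOn (fun r => ∫ s in (0:ℝ)..r, F s * s * e2fun s) (Set.Ioi 0) :=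
      fun x hx => (hI1 hx).continuousAt.continuousWithinAt
    have hI2c : ContinuousOn (fun r => ∫ s in (0:ℝ)..r, F s * s * phi0 s / 2) (Set.Ioi 0) :=
      fun x hx => (hI2 hx).continuousAt.continuousWithinAt
    have hd1 : ContDiffOn ℝ 1
        (fun r => -(p1d r/2) * (∫ s in (0:ℝ)..r, F s * s * e2fun s)
          + e2d r * (∫ s in (0:ℝ)..r, F s * s * phi0 s / 2)) (Set.Ioi 0) := by
      rw [show (1 : WithTop ℕ∞) = 0 + 1 by norm_num,
        contDiffOn_succ_iff_deriv_of_isOpen isOpen_Ioi]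
      refine ⟨fun x hx => (hw1 hx).differentiableAt.differentiableWithinAt, by simp, ?_⟩
      rw [contDiffOn_zero]
      have hcw2 : ContinuousOn
          (fun r => (-(p1dd r/2) * (∫ s in (0:ℝ)..r, F s * s * e2fun s)
              + -(p1d r/2) * (F r * r * e2fun r))
            + (e2dd r * (∫ s in (0:ℝ)..r, F s * s * phi0 s / 2)
              + e2d r * (F r * r * phi0 r / 2))) (Set.Ioi 0) := by
        apply ContinuousOn.add
        · exact (((hp1ddc.continuousOn.div_const 2).neg).mul hI1c).add
            (((hp1dc.continuousOn.div_const 2).neg).mul hG1c)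
        · exact (he2ddc.mul hI2c).add (he2dc.mul hG2c)
      apply hcw2.congr
      intro x hx
      exact (hw1 hx).deriv
    apply hd1.congr
    intro x hx
    exact (hw hx).deriv
  · intro R hR
    rw [(hw2 hR).deriv, (hw hR).deriv]
    show _ - _ * (-(phi0 R / 2) * _ + e2fun R * _) = F R
    set a := ∫ s in (0:ℝ)..R, F s * s * e2fun s with ha
    set b := ∫ s in (0:ℝ)..R, F s * s * phi0 s / 2 with hb
    linear_combination (-(a)/2) * hom_phi hR + b * hom_e2 hR + (F R/2) * wron hR
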